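/- (Mover properties do not characterize sound sync-point instrumentations.) Let a, b, c be distinct actions, G the CFG with locations ℓ₀,ℓ₁,ℓ₂,ℓ₃ (initial ℓ₀, exit ℓ₃) and edges (ℓ₀,a,ℓ₁), (ℓ₁,b,ℓ₂), (ℓ₂,c,ℓ₃), and G′ the CFG with locations ℓ₀,ℓ₁,ℓ̂₁,ℓ₂,ℓ̂₂,ℓ₃ and edges (ℓ₀,a,ℓ₁), (ℓ₁,•,ℓ̂₁), (ℓ̂₁,b,ℓ₂), (ℓ₂,•,ℓ̂₂), (ℓ̂₂,c,ℓ₃). Then G′ is a sync-point instrumentation of G, and for the symmetric commutativity relations I = {a,b,c}² ∖ {(b,b),(c,c)} and I′ = {a,b,c}² ∖ {(b,c),(c,b)}: (i) G′ is sound with respect to I; (ii) G′ is unsound with respect to I′; (iii) every action in {a,b,c} has the same left-mover and right-mover status with respect to I and with respect to I′. -/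

import Mathlib

/-!
Common definitions: control flow graphs, traces, interleavings of parameterized
programs, the covering preorder, Mazurkiewicz reductions, atomic fusions,
sync-point instrumentations, locks and general synchronization alphabets.
-/

/-- `PathRel E ℓ w ℓ'` : the word `w` labels a path from `ℓ` to `ℓ'` in the
labeled graph with edge relation `E`. -/
inductive PathRel {L α : Type} (E : L → α → L → Prop) : L → List α → L → Prop
  | nil (ℓ : L) : PathRel E ℓ [] ℓ
  | cons {ℓ ℓ' ℓ'' : L} {a : α} {w : List α} :
      E ℓ a ℓ' → PathRel E ℓ' w ℓ'' → PathRel E ℓ (a :: w) ℓ''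

/-- A control flow graph over the alphabet `α`. -/
structure CFG (α : Type) where
  Loc : Type
  loc_finite : Finite Loc
  Edge : Loc → α → Loc → Prop
  init : Loc
  exit : Loc
  init_ne_exit : init ≠ exit

namespace CFG

variable {α : Type}

/-- The set of words labeling paths from the initial to the exit location. -/
def traces (G : CFG α) : Set (List α) := { w | PathRel G.Edge G.init w G.exit }

/-- The set of actions occurring in `G`. -/
def alphabet (G : CFG α) : Set α := { a | ∃ ℓ ℓ', G.Edge ℓ a ℓ' }

/-- Action `a` labels at most one edge of `G`. -/
def UniqueAct (G : CFG α) (a : α) : Prop :=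
  ∀ ⦃ℓ₁ ℓ₁' ℓ₂ ℓ₂' : G.Loc⦄, G.Edge ℓ₁ a ℓ₁' → G.Edge ℓ₂ a ℓ₂' → ℓ₁ = ℓ₂ ∧ ℓ₁' = ℓ₂'

/-- The transition relation is finite. -/
def EdgeFinite (G : CFG α) : Prop :=
  { p : G.Loc × α × G.Loc | G.Edge p.1 p.2.1 p.2.2 }.Finite

/-- Every location is reachable from the initial location, and the exit
location is reachable from every location. -/
def Reachable (G : CFG α) : Prop :=
  ∀ ℓ : G.Loc, (∃ w, PathRel G.Edge G.init w ℓ) ∧ (∃ w, PathRel G.Edge ℓ w G.exit)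

/-- Well-formedness of a CFG over a plain alphabet (finitely many transitions,
reachability conditions, and every action labels at most one edge). -/
def WF (G : CFG α) : Prop := G.EdgeFinite ∧ G.Reachable ∧ ∀ a : α, G.UniqueAct a

end CFG

/-! ### Interleavings -/

/-- `τ↑i` : the projection of an interleaving to the actions of thread `i`. -/
def projThread {α : Type} (i : ℕ) (τ : List (α × ℕ)) : List α :=
  (τ.filter (fun x => x.2 == i)).map Prod.fst

/-- The interleavings of the parameterized program with thread template `G`
and no synchronization. -/
def progLang {α : Type} (G : CFG α) : Set (List (α × ℕ)) :=
  { τ | ∀ i : ℕ, projThread i τ ∈ G.traces ∨ projThread i τ = [] }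

/-- One swap of two adjacent commuting indexed actions of different threads. -/
def SwapStep {α : Type} (I : Set (α × α)) (τ τ' : List (α × ℕ)) : Prop :=
  ∃ (ρ σ : List (α × ℕ)) (a b : α) (i j : ℕ),
    (a, b) ∈ I ∧ i ≠ j ∧
      τ = ρ ++ (a, i) :: (b, j) :: σ ∧ τ' = ρ ++ (b, j) :: (a, i) :: σ

/-- The covering preorder `⊑_I`: the smallest reflexive-transitive relation
allowing swaps of adjacent `I`-commuting actions of different threads. -/
def CoveredBy {α : Type} (I : Set (α × α)) : List (α × ℕ) → List (α × ℕ) → Prop :=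
  Relation.ReflTransGen (SwapStep I)

/-- `L₁` is a Mazurkiewicz reduction (up to `I`) of `L₂`. -/
def MazReduction {α : Type} (I : Set (α × α)) (L₁ L₂ : Set (List (α × ℕ))) : Prop :=
  L₁ ⊆ L₂ ∧ ∀ τ ∈ L₂, ∃ τ' ∈ L₁, CoveredBy I τ τ'

/-! ### Morphisms -/

/-- Image of a word under a morphism `μ : α → 𝒫(β^*)`. -/
def morphWord {α β : Type} (μ : α → Set (List β)) : List α → Set (List β)
  | [] => {[]}
  | x :: w => { s | ∃ u ∈ μ x, ∃ v ∈ morphWord μ w, s = u ++ v }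

/-- Image of a language under a morphism. -/
def morphLang {α β : Type} (μ : α → Set (List β)) (L : Set (List α)) : Set (List β) :=
  ⋃ w ∈ L, morphWord μ w

/-! ### Atomic fusions -/

/-- Locations of the graph obtained from `G'` by substituting `Gβ k` for the
edge labeled `β k`: locations of `G'` together with the interior locations of
each `Gβ k`. -/
def fuseLoc {α : Type} (G' : CFG α) {n : ℕ} (Gβ : Fin n → CFG α) : Type :=
  G'.Loc ⊕ Σ k : Fin n, { ℓ : (Gβ k).Loc // ℓ ≠ (Gβ k).init ∧ ℓ ≠ (Gβ k).exit }

open Classical in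
/-- Embedding of the locations of `Gβ k` into the substituted graph, identifying
the initial and exit locations of `Gβ k` with the endpoints of the `β k` edge. -/
noncomputable def fuseEmb {α : Type} (G' : CFG α) {n : ℕ} (Gβ : Fin n → CFG α)
    (src tgt : Fin n → G'.Loc) (k : Fin n) (ℓ : (Gβ k).Loc) : fuseLoc G' Gβ :=
  if h1 : ℓ = (Gβ k).init then Sum.inl (src k)
  else if h2 : ℓ = (Gβ k).exit then Sum.inl (tgt k)
  else Sum.inr ⟨k, ℓ, h1, h2⟩

/-- Edges of the graph obtained from `G'` by substituting each `Gβ k` for the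
edge labeled `β k` (with endpoints `src k`, `tgt k`). -/
def fuseEdge {α : Type} (G' : CFG α) {n : ℕ} (β : Fin n → α) (Gβ : Fin n → CFG α)
    (src tgt : Fin n → G'.Loc) (x : fuseLoc G' Gβ) (a : α) (y : fuseLoc G' Gβ) : Prop :=
  (∃ ℓ ℓ', G'.Edge ℓ a ℓ' ∧ (∀ k, a ≠ β k) ∧ x = Sum.inl ℓ ∧ y = Sum.inl ℓ') ∨
  (∃ k ℓ ℓ', (Gβ k).Edge ℓ a ℓ' ∧
      x = fuseEmb G' Gβ src tgt k ℓ ∧ y = fuseEmb G' Gβ src tgt k ℓ')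

/-- An atomic fusion `F = (G', (β 0, Gβ 0), …, (β (n-1), Gβ (n-1)))` of the CFG `G`:
`G` is (up to isomorphism) obtained from `G'` by replacing, for each `k`, the unique
edge labeled `β k` by the graph `Gβ k`. -/
structure AtomicFusion {α : Type} (G : CFG α) (n : ℕ) where
  G' : CFG α
  β : Fin n → α
  Gβ : Fin n → CFG α
  β_inj : Function.Injective β
  src : Fin n → G'.Loc
  tgt : Fin n → G'.Loc
  β_edge : ∀ k, G'.Edge (src k) (β k) (tgt k)
  Gβ_alph : ∀ k a, a ∈ (Gβ k).alphabet → ∀ k', a ≠ β k'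
  Gβ_nonempty : ∀ k, ((Gβ k).traces).Nonempty
  iso : G.Loc ≃ fuseLoc G' Gβ
  iso_init : iso G.init = Sum.inl G'.init
  iso_exit : iso G.exit = Sum.inl G'.exit
  iso_edge : ∀ ℓ a ℓ', G.Edge ℓ a ℓ' ↔ fuseEdge G' β Gβ src tgt (iso ℓ) a (iso ℓ')

namespace AtomicFusion

variable {α : Type} {G : CFG α} {n : ℕ}

/-- The fusion morphism `μ_F`: maps each block symbol `β k` to `traces (Gβ k)`
and any other action `a` to `{[a]}`. -/
def morph (F : AtomicFusion G n) (a : α) : Set (List α) :=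
  { w | (∃ k, a = F.β k ∧ w ∈ (F.Gβ k).traces) ∨ ((∀ k, a ≠ F.β k) ∧ w = [a]) }

/-- The lift `μ̂_F` of the fusion morphism to indexed actions. -/
def morphIdx (F : AtomicFusion G n) (x : α × ℕ) : Set (List (α × ℕ)) :=
  { w | ∃ u ∈ F.morph x.1, w = u.map (fun a => (a, x.2)) }

/-- Soundness of an atomic fusion wrt. the commutativity relation `I`:
`μ̂_F(L(G'))` is a Mazurkiewicz reduction (up to `I`) of `L(G)`. -/
def Sound (F : AtomicFusion G n) (I : Set (α × α)) : Prop :=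
  MazReduction I (morphLang F.morphIdx (progLang F.G')) (progLang G)

end AtomicFusion

/-! ### Movers -/

/-- `a` is a left-mover if `(b, a) ∈ I` for all `b ∈ Σ(G)`. -/
def LeftMover {α : Type} (G : CFG α) (I : Set (α × α)) (a : α) : Prop :=
  ∀ b ∈ G.alphabet, (b, a) ∈ I

/-- `a` is a right-mover if `(a, b) ∈ I` for all `b ∈ Σ(G)`. -/
def RightMover {α : Type} (G : CFG α) (I : Set (α × α)) (a : α) : Prop :=
  ∀ b ∈ G.alphabet, (a, b) ∈ I

/-! ### Sync-points -/

/-- The word `⟨•:t₁⟩ … ⟨•:t_n⟩` where `T = {t₁ < … < t_n}`; the sync-point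
symbol `•` is represented by `none`. -/
def bulletWord {α : Type} (T : Finset ℕ) : List (Option α × ℕ) :=
  (T.sort (· ≤ ·)).map (fun t => ((none : Option α), t))

/-- A concatenation of words, each of which either consists of program actions
of threads in `T` only, or equals `⟨•:T⟩`. -/
inductive PhaseWord {α : Type} (T : Finset ℕ) : List (Option α × ℕ) → Prop
  | nil : PhaseWord T []
  | act {w τ : List (Option α × ℕ)} :
      (∀ x ∈ w, (∃ a : α, x.1 = some a) ∧ x.2 ∈ T) → PhaseWord T τ → PhaseWord T (w ++ τ)
  | bullet {τ : List (Option α × ℕ)} : PhaseWord T τ → PhaseWord T (bulletWord T ++ τ)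

/-- `sync_{•,T}`: while the threads in `T` are running they pass sync-points
together; at some point a subset `T' ⊊ T` of threads remains. -/
inductive SyncT {α : Type} : Finset ℕ → List (Option α × ℕ) → Prop
  | base : SyncT ∅ []
  | step {T T' : Finset ℕ} {τ₁ τ₂ : List (Option α × ℕ)} :
      T' ⊂ T → PhaseWord T τ₁ → SyncT T' τ₂ → SyncT T (τ₁ ++ τ₂)

/-- `sync_•(τ̂)` : there is a finite set `T ⊆ ℕ` with `sync_{•,T}(τ̂)`. -/
def SyncBullet {α : Type} (τ : List (Option α × ℕ)) : Prop := ∃ T : Finset ℕ, SyncT T τ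

/-- Restriction of an indexed word over `Σ ∪ {•}` to its `Σ`-indexed letters. -/
def restrictSigma {α : Type} (τ : List (Option α × ℕ)) : List (α × ℕ) :=
  τ.filterMap (fun x => x.1.map (fun a => (a, x.2)))

/-- `G'` is a sync-point instrumentation of `G`: erasing `•` from the traces of
`G'` yields exactly the traces of `G`, injectively. -/
structure SyncInstr {α : Type} (G : CFG α) (G' : CFG (Option α)) : Prop where
  proj_traces : G.traces = (fun τ => τ.filterMap id) '' G'.traces
  proj_inj : ∀ τ₁ ∈ G'.traces, ∀ τ₂ ∈ G'.traces, τ₁.filterMap id = τ₂.filterMap id → τ₁ = τ₂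

/-- Well-formedness of a CFG over `Σ ∪ {•}` (every action of `Σ` labels at most
one edge; `•` may label several edges). -/
def CFG.WFsync {α : Type} (G' : CFG (Option α)) : Prop :=
  G'.EdgeFinite ∧ G'.Reachable ∧ ∀ a : α, G'.UniqueAct (some a)

/-- The language `L(G, G')` of the sync-point instrumented program. -/
def instrLang {α : Type} (G' : CFG (Option α)) : Set (List (α × ℕ)) :=
  { τ | ∃ τ' : List (Option α × ℕ), τ = restrictSigma τ' ∧ SyncBullet τ' ∧
      ∀ i : ℕ, projThread i τ' ∈ G'.traces ∨ projThread i τ' = [] }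

/-- `|w|_•` : the number of occurrences of the sync-point symbol in `w`. -/
def bulletCount {α : Type} (w : List (Option α)) : ℕ := (w.filter (fun x => x.isNone)).length

/-- The phase order `⤳`: `a` can occur in a strictly later phase than `b` in
some execution of the instrumented program. -/
def PhaseOrder {α : Type} (G' : CFG (Option α)) (a b : α) : Prop :=
  ∃ τ' : List (Option α × ℕ), SyncBullet τ' ∧ restrictSigma τ' ∈ instrLang G' ∧
    ∃ i j : ℕ, i ≠ j ∧
      ∃ τ₁ σ₁, projThread i τ' = τ₁ ++ some a :: σ₁ ∧
      ∃ τ₂ σ₂, projThread j τ' = τ₂ ++ some b :: σ₂ ∧ bulletCount τ₁ < bulletCount τ₂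

/-! ### General synchronization alphabets -/

/-- A synchronization alphabet: a set `σs` of synchronization actions together
with a predicate `Φ` on indexed words over `Σ ∪ S`, preserved by all
permutations of thread indices. -/
structure SyncAlphabet (α σs : Type) where
  Φ : List ((α ⊕ σs) × ℕ) → Prop
  perm_inv : ∀ (π : Equiv.Perm ℕ) (τ : List ((α ⊕ σs) × ℕ)),
      Φ τ → Φ (τ.map (fun x => (x.1, π x.2)))

/-- Restriction of an indexed word over `Σ ∪ S` to its `Σ`-indexed letters. -/
def restrictActions {α σs : Type} (τ' : List ((α ⊕ σs) × ℕ)) : List (α × ℕ) :=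
  τ'.filterMap (fun x => (x.1.getLeft?).map (fun a => (a, x.2)))

/-- The language of the parameterized program `P = ((S, Φ), G)`. -/
def syncLang {α σs : Type} (SA : SyncAlphabet α σs) (G : CFG (α ⊕ σs)) :
    Set (List (α × ℕ)) :=
  { τ | ∃ τ', τ = restrictActions τ' ∧ SA.Φ τ' ∧
      ∀ i : ℕ, projThread i τ' ∈ G.traces ∨ projThread i τ' = [] }

/-- The configuration `C` is coverable in `P = ((S, Φ), G)`. -/
def Coverable {α σs : Type} (SA : SyncAlphabet α σs) (G : CFG (α ⊕ σs))
    {r : ℕ} (C : Fin r → G.Loc) : Prop :=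
  ∃ (τ' : List ((α ⊕ σs) × ℕ)) (t : Fin r → ℕ), SA.Φ τ' ∧ Function.Injective t ∧
    ∀ k, PathRel G.Edge G.init (projThread (t k) τ') (C k)

/-- Well-formedness of a CFG over `Σ ∪ S` (only actions of `Σ` are required to
label at most one edge). -/
def CFG.WFsum {α σs : Type} (G : CFG (α ⊕ σs)) : Prop :=
  G.EdgeFinite ∧ G.Reachable ∧ ∀ a : α, G.UniqueAct (Sum.inl a)

/-! ### Locks -/

/-- The valid projections of a lock-respecting execution to a single lock `m`:
a sequence of blocks `⟨acq(m) rel(m) : i⟩`, optionally followed by a single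
`⟨acq(m) : i⟩`.  `true` stands for `acq(m)`, `false` for `rel(m)`. -/
inductive LockSeq : List (Bool × ℕ) → Prop
  | nil : LockSeq []
  | final (i : ℕ) : LockSeq [(true, i)]
  | block (i : ℕ) {w : List (Bool × ℕ)} : LockSeq w → LockSeq ((true, i) :: (false, i) :: w)

/-- Projection of an indexed word over `Σ ∪ S_lk` to the indexed occurrences of
`acq(m)`/`rel(m)` for the lock `m`. -/
def lockProj {α M : Type} [DecidableEq M] (m : M) (τ' : List ((α ⊕ (M × Bool)) × ℕ)) :
    List (Bool × ℕ) :=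
  τ'.filterMap (fun x => match x.1 with
    | Sum.inl _ => none
    | Sum.inr p => if p.1 = m then some (p.2, x.2) else none)

/-- The lock synchronization predicate `sync_lk`. -/
def SyncLk {α M : Type} [DecidableEq M] (τ' : List ((α ⊕ (M × Bool)) × ℕ)) : Prop :=
  ∀ m : M, LockSeq (lockProj m τ')

/-- The language of a program `P = ((S_lk, sync_lk), G)` with locks. -/
def lockLang {α M : Type} [DecidableEq M] (G : CFG (α ⊕ (M × Bool))) :
    Set (List (α × ℕ)) :=
  { τ | ∃ τ', τ = restrictActions τ' ∧ SyncLk τ' ∧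
      ∀ i : ℕ, projThread i τ' ∈ G.traces ∨ projThread i τ' = [] }

/-- Coverability of a configuration in a program with locks. -/
def CoverableLk {α M : Type} [DecidableEq M] (G : CFG (α ⊕ (M × Bool)))
    {r : ℕ} (C : Fin r → G.Loc) : Prop :=
  ∃ (τ' : List ((α ⊕ (M × Bool)) × ℕ)) (t : Fin r → ℕ), SyncLk τ' ∧ Function.Injective t ∧
    ∀ k, PathRel G.Edge G.init (projThread (t k) τ') (C k)

/-! ### Locks and sync-points combined -/

/-- Restriction of an indexed word over `Σ ∪ S_lk ∪ {•}` to `(Σ ∪ S_lk)`-indexed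
letters. -/
def restrictSyncWord {α M : Type} (τ' : List (Option (α ⊕ (M × Bool)) × ℕ)) :
    List ((α ⊕ (M × Bool)) × ℕ) :=
  τ'.filterMap (fun x => x.1.map (fun e => (e, x.2)))

/-- Restriction of an indexed word over `Σ ∪ S_lk ∪ {•}` to `(Σ ∪ {•})`-indexed
letters. -/
def restrictBulletWord {α M : Type} (τ' : List (Option (α ⊕ (M × Bool)) × ℕ)) :
    List (Option α × ℕ) :=
  τ'.filterMap (fun x => match x.1 with
    | none => some ((none : Option α), x.2)
    | some (Sum.inl a) => some (some a, x.2)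
    | some (Sum.inr _) => none)

/-- Restriction of an indexed word over `Σ ∪ S_lk ∪ {•}` to `Σ`-indexed letters. -/
def restrictActionsO {α M : Type} (τ' : List (Option (α ⊕ (M × Bool)) × ℕ)) :
    List (α × ℕ) :=
  τ'.filterMap (fun x => match x.1 with
    | some (Sum.inl a) => some (a, x.2)
    | _ => none)

/-- The language `L(P̂, G')` of a lock program instrumented with sync-points. -/
def instrLockLang {α M : Type} [DecidableEq M] (G' : CFG (Option (α ⊕ (M × Bool)))) :
    Set (List (α × ℕ)) :=
  { τ | ∃ τ', τ = restrictActionsO τ' ∧ SyncLk (restrictSyncWord τ') ∧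
      SyncBullet (restrictBulletWord τ') ∧
      ∀ i : ℕ, projThread i τ' ∈ G'.traces ∨ projThread i τ' = [] }

/-- The thread template `G` with locations `ℓ₀,…,ℓ₃` (initial `ℓ₀`, exit `ℓ₃`) and edges
`(ℓ₀,a,ℓ₁)`, `(ℓ₁,b,ℓ₂)`, `(ℓ₂,c,ℓ₃)`. -/
def exG14 {α : Type} (a b c : α) : CFG α where
  Loc := Fin 4
  loc_finite := inferInstance
  Edge := fun ℓ x ℓ' =>
    (ℓ = 0 ∧ x = a ∧ ℓ' = 1) ∨ (ℓ = 1 ∧ x = b ∧ ℓ' = 2) ∨ (ℓ = 2 ∧ x = c ∧ ℓ' = 3)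
  init := 0
  exit := 3
  init_ne_exit := by decide

/-- The instrumented template `G'` with locations `ℓ₀,ℓ₁,ℓ̂₁,ℓ₂,ℓ̂₂,ℓ₃` (as `0,…,5`) and
edges `(ℓ₀,a,ℓ₁)`, `(ℓ₁,•,ℓ̂₁)`, `(ℓ̂₁,b,ℓ₂)`, `(ℓ₂,•,ℓ̂₂)`, `(ℓ̂₂,c,ℓ₃)`. -/
def exG14' {α : Type} (a b c : α) : CFG (Option α) where
  Loc := Fin 6
  loc_finite := inferInstance
  Edge := fun ℓ x ℓ' =>
    (ℓ = 0 ∧ x = some a ∧ ℓ' = 1) ∨ (ℓ = 1 ∧ x = none ∧ ℓ' = 2) ∨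
    (ℓ = 2 ∧ x = some b ∧ ℓ' = 3) ∨ (ℓ = 3 ∧ x = none ∧ ℓ' = 4) ∨
    (ℓ = 4 ∧ x = some c ∧ ℓ' = 5)
  init := 0
  exit := 5
  init_ne_exit := by decide

namespace Stmt14

@[simp] lemma projThread_nil {α : Type} (i : ℕ) : projThread i ([] : List (α × ℕ)) = [] := rfl

lemma projThread_cons {α : Type} (i : ℕ) (x : α × ℕ) (τ : List (α × ℕ)) :
    projThread i (x :: τ) =
      if x.2 = i then x.1 :: projThread i τ else projThread i τ := by
  by_cases h : x.2 = i <;> simp [projThread, List.filter_cons, h]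

lemma projThread_append {α : Type} (i : ℕ) (τ σ : List (α × ℕ)) :
    projThread i (τ ++ σ) = projThread i τ ++ projThread i σ := by
  simp [projThread, List.filter_append]

lemma traces14 {α : Type} (a b c : α) : (exG14 a b c).traces = {[a, b, c]} := by
  ext w
  constructor
  · intro hw
    have key : ∀ (ℓ : Fin 4) (w : List α) (ℓ' : Fin 4),
        PathRel (exG14 a b c).Edge ℓ w ℓ' → ℓ' = 3 →
        ((ℓ = 0 → w = [a,b,c]) ∧ (ℓ = 1 → w = [b,c]) ∧ (ℓ = 2 → w = [c]) ∧ (ℓ = 3 → w = [])) := by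
      intro ℓ w ℓ' h
      induction h with
      | nil ℓ =>
        intro h3; subst h3
        refine ⟨?_, ?_, ?_, fun _ => rfl⟩ <;> intro h <;> exact absurd h (by decide)
      | cons e p ih =>
        intro h3
        obtain ⟨i0, i1, i2, i3⟩ := ih h3
        rcases e with ⟨h1, h2, h3'⟩ | ⟨h1, h2, h3'⟩ | ⟨h1, h2, h3'⟩ <;> subst h1 <;> subst h2 <;> subst h3' <;>
          refine ⟨?_, ?_, ?_, ?_⟩ <;> intro h <;> first
            | exact absurd h (by decide)
            | (first | simp [i0 rfl] | simp [i1 rfl] | simp [i2 rfl] | simp [i3 rfl])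
    exact (key _ _ _ hw rfl).1 rfl
  · rintro rfl
    exact PathRel.cons (Or.inl ⟨rfl, rfl, rfl⟩)
      (PathRel.cons (Or.inr (Or.inl ⟨rfl, rfl, rfl⟩))
        (PathRel.cons (Or.inr (Or.inr ⟨rfl, rfl, rfl⟩)) (PathRel.nil _)))

lemma traces14' {α : Type} (a b c : α) :
    (exG14' a b c).traces = {[some a, none, some b, none, some c]} := by
  ext w
  constructor
  · intro hw
    have key : ∀ (ℓ : Fin 6) (w : List (Option α)) (ℓ' : Fin 6),
        PathRel (exG14' a b c).Edge ℓ w ℓ' → ℓ' = 5 →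
        ((ℓ = 0 → w = [some a, none, some b, none, some c]) ∧
         (ℓ = 1 → w = [none, some b, none, some c]) ∧
         (ℓ = 2 → w = [some b, none, some c]) ∧
         (ℓ = 3 → w = [none, some c]) ∧
         (ℓ = 4 → w = [some c]) ∧ (ℓ = 5 → w = [])) := by
      intro ℓ w ℓ' h
      induction h with
      | nil ℓ =>
        intro h3; subst h3
        refine ⟨?_, ?_, ?_, ?_, ?_, fun _ => rfl⟩ <;> intro h <;> exact absurd h (by decide)
      | cons e p ih =>
        intro h3
        obtain ⟨i0, i1, i2, i3, i4, i5⟩ := ih h3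
        rcases e with ⟨h1, h2, h3'⟩ | ⟨h1, h2, h3'⟩ | ⟨h1, h2, h3'⟩ | ⟨h1, h2, h3'⟩ | ⟨h1, h2, h3'⟩ <;>
          subst h1 <;> subst h2 <;> subst h3' <;>
          refine ⟨?_, ?_, ?_, ?_, ?_, ?_⟩ <;> intro h <;> first
            | exact absurd h (by decide)
            | (first | simp [i0 rfl] | simp [i1 rfl] | simp [i2 rfl] | simp [i3 rfl] | simp [i4 rfl] | simp [i5 rfl])
    exact (key _ _ _ hw rfl).1 rfl
  · rintro rfl
    exact PathRel.cons (Or.inl ⟨rfl, rfl, rfl⟩)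
      (PathRel.cons (Or.inr (Or.inl ⟨rfl, rfl, rfl⟩))
        (PathRel.cons (Or.inr (Or.inr (Or.inl ⟨rfl, rfl, rfl⟩)))
          (PathRel.cons (Or.inr (Or.inr (Or.inr (Or.inl ⟨rfl, rfl, rfl⟩))))
            (PathRel.cons (Or.inr (Or.inr (Or.inr (Or.inr ⟨rfl, rfl, rfl⟩)))) (PathRel.nil _)))))

end Stmt14
namespace Stmt14

lemma mem_projThread {α : Type} {x : α × ℕ} {τ : List (α × ℕ)} (h : x ∈ τ) :
    x.1 ∈ projThread x.2 τ := by
  exact List.mem_map_of_mem (List.mem_filter.2 ⟨h, by simp⟩)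

lemma swapStep_projThread {α : Type} {I : Set (α × α)} {τ τ' : List (α × ℕ)}
    (h : SwapStep I τ τ') (k : ℕ) : projThread k τ' = projThread k τ := by
  obtain ⟨ρ, σ, x, y, i, j, hI, hij, rfl, rfl⟩ := h
  by_cases hi : i = k
  · by_cases hj : j = k
    · exact absurd (hi.trans hj.symm) hij
    · simp [projThread_append, projThread_cons, hi, hj]
  · by_cases hj : j = k <;> simp [projThread_append, projThread_cons, hi, hj]

lemma coveredBy_projThread {α : Type} {I : Set (α × α)} {τ τ' : List (α × ℕ)}
    (h : CoveredBy I τ τ') (k : ℕ) : projThread k τ' = projThread k τ := by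
  induction h with
  | refl => rfl
  | tail _ h2 ih => exact (swapStep_projThread h2 k).trans ih

lemma swapStep_cons {α : Type} {I : Set (α × α)} {τ τ' : List (α × ℕ)} (x : α × ℕ)
    (h : SwapStep I τ τ') : SwapStep I (x :: τ) (x :: τ') := by
  obtain ⟨ρ, σ, p, q, i, j, hI, hij, rfl, rfl⟩ := h
  exact ⟨x :: ρ, σ, p, q, i, j, hI, hij, rfl, rfl⟩

lemma coveredBy_cons {α : Type} {I : Set (α × α)} {τ τ' : List (α × ℕ)} (x : α × ℕ)
    (h : CoveredBy I τ τ') : CoveredBy I (x :: τ) (x :: τ') := by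
  induction h with
  | refl => exact Relation.ReflTransGen.refl
  | tail _ h2 ih => exact ih.tail (swapStep_cons x h2)

lemma coveredBy_move {α : Type} {I : Set (α × α)} (x : α × ℕ) (u v : List (α × ℕ))
    (h : ∀ y ∈ u, (x.1, y.1) ∈ I ∧ x.2 ≠ y.2) :
    CoveredBy I (x :: (u ++ v)) (u ++ x :: v) := by
  induction u generalizing v with
  | nil => exact Relation.ReflTransGen.refl
  | cons y u ih =>
    have step1 : SwapStep I (x :: y :: (u ++ v)) (y :: x :: (u ++ v)) :=
      ⟨[], u ++ v, x.1, y.1, x.2, y.2, (h y (by simp)).1, (h y (by simp)).2, rfl, rfl⟩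
    exact Relation.ReflTransGen.head step1
      (coveredBy_cons y (ih v (fun z hz => h z (List.mem_cons_of_mem _ hz))))

lemma tail_suffix {α : Type} {x : α} {l L : List α} (h : (x :: l) <:+ L) : l <:+ L := by
  obtain ⟨p, hp⟩ := h
  exact ⟨p ++ [x], by simpa using hp⟩

lemma sort_covered {α : Type} [DecidableEq α] (a b c : α)
    (hab : a ≠ b) (hac : a ≠ c) (hbc : b ≠ c) (I : Set (α × α))
    (hIba : (b, a) ∈ I) (hIca : (c, a) ∈ I) (hIcb : (c, b) ∈ I) :
    ∀ τ : List (α × ℕ), (∀ i, projThread i τ <:+ [a, b, c]) →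
      CoveredBy I τ (τ.filter (fun x => x.1 = a) ++ τ.filter (fun x => x.1 = b)
        ++ τ.filter (fun x => x.1 = c)) := by
  intro τ
  induction τ with
  | nil => intro _; simp; exact Relation.ReflTransGen.refl
  | cons x τ ih =>
    intro hsuf
    have hsuf' : ∀ i, projThread i τ <:+ [a, b, c] := by
      intro i
      have := hsuf i
      rw [projThread_cons] at this
      by_cases h : x.2 = i
      · rw [if_pos h] at this; exact tail_suffix this
      · rwa [if_neg h] at this
    have IH := ih hsuf'
    have hxproj : projThread x.2 (x :: τ) = x.1 :: projThread x.2 τ := by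
      rw [projThread_cons, if_pos rfl]
    have hsx := hsuf x.2
    rw [hxproj] at hsx
    obtain ⟨p, hp⟩ := hsx
    have hxabc : x.1 = a ∨ x.1 = b ∨ x.1 = c := by
      have : x.1 ∈ [a, b, c] := by rw [← hp]; simp
      simpa using this
    set A := τ.filter (fun x => x.1 = a) with hA
    set B := τ.filter (fun x => x.1 = b) with hB
    set C := τ.filter (fun x => x.1 = c) with hC
    rcases hxabc with h1 | h1 | h1
    · -- x is an a: stays at the front
      have hf1 : (x :: τ).filter (fun x => x.1 = a) = x :: A := by
        simp [List.filter_cons, h1, hA, hB, hC]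
      have hf2 : (x :: τ).filter (fun x => x.1 = b) = B := by
        simp [List.filter_cons, h1, hab, hB]
      have hf3 : (x :: τ).filter (fun x => x.1 = c) = C := by
        simp [List.filter_cons, h1, hac, hC]
      rw [hf1, hf2, hf3]
      exact coveredBy_cons x IH
    · -- x is a b: move past A
      have hf1 : (x :: τ).filter (fun x => x.1 = a) = A := by
        simp [List.filter_cons, h1, Ne.symm hab, hA]
      have hf2 : (x :: τ).filter (fun x => x.1 = b) = x :: B := by
        simp [List.filter_cons, h1, hA, hB, hC]
      have hf3 : (x :: τ).filter (fun x => x.1 = c) = C := by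
        simp [List.filter_cons, h1, hbc, hC]
      rw [hf1, hf2, hf3]
      have hp2 : p ++ b :: projThread x.2 τ = [a, b, c] := by rw [h1] at hp; exact hp
      have hτproj : projThread x.2 τ = [c] ∨ projThread x.2 τ = [] := by
        match p, hp2 with
        | [], h =>
          injection h with h1' _
          exact absurd h1' (Ne.symm hab)
        | [_], h =>
          injection h with _ h; injection h with _ h
          exact Or.inl h
        | [_, _], h =>
          injection h with _ h; injection h with _ h; injection h with h1' _
          exact absurd h1' hbc
        | [_, _, _], h => simp at h
        | (_ :: _ :: _ :: _ :: _), h => simp at h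
      have hmv : ∀ y ∈ A, (x.1, y.1) ∈ I ∧ x.2 ≠ y.2 := by
        intro y hy
        rw [hA] at hy
        have hya : y.1 = a := by simpa using (List.mem_filter.1 hy).2
        have hyτ : y ∈ τ := (List.mem_filter.1 hy).1
        refine ⟨by rw [h1, hya]; exact hIba, ?_⟩
        intro hcontra
        have hmem := mem_projThread hyτ
        rw [← hcontra] at hmem
        rcases hτproj with h | h <;> rw [h] at hmem <;> rw [hya] at hmem <;> simp at hmem
        exact hac hmem
      rw [List.append_assoc] at IH
      rw [show A ++ (x :: B) ++ C = A ++ x :: (B ++ C) by simp]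
      exact Relation.ReflTransGen.trans (coveredBy_cons x IH) (coveredBy_move x A (B ++ C) hmv)
    · -- x is a c: move past A ++ B
      have hf1 : (x :: τ).filter (fun x => x.1 = a) = A := by
        simp [List.filter_cons, h1, Ne.symm hac, hA]
      have hf2 : (x :: τ).filter (fun x => x.1 = b) = B := by
        simp [List.filter_cons, h1, Ne.symm hbc, hB]
      have hf3 : (x :: τ).filter (fun x => x.1 = c) = x :: C := by
        simp [List.filter_cons, h1, hA, hB, hC]
      rw [hf1, hf2, hf3]
      have hp2 : p ++ c :: projThread x.2 τ = [a, b, c] := by rw [h1] at hp; exact hp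
      have hτproj : projThread x.2 τ = [] := by
        match p, hp2 with
        | [], h =>
          injection h with h1' _
          exact absurd h1' (Ne.symm hac)
        | [_], h =>
          injection h with _ h; injection h with h1' _
          exact absurd h1' (Ne.symm hbc)
        | [_, _], h => exact (by simpa using h : _ ∧ _ ∧ projThread x.2 τ = []).2.2
        | [_, _, _], h => simp at h
        | (_ :: _ :: _ :: _ :: _), h => simp at h
      have hmv : ∀ y ∈ A ++ B, (x.1, y.1) ∈ I ∧ x.2 ≠ y.2 := by
        intro y hy
        have hyτ : y ∈ τ ∧ (y.1 = a ∨ y.1 = b) := by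
          rcases List.mem_append.1 hy with h | h
          · exact ⟨(List.mem_filter.1 h).1, Or.inl (by simpa using (List.mem_filter.1 h).2)⟩
          · exact ⟨(List.mem_filter.1 h).1, Or.inr (by simpa using (List.mem_filter.1 h).2)⟩
        constructor
        · rcases hyτ.2 with h | h <;> rw [h1, h]
          · exact hIca
          · exact hIcb
        · intro hcontra
          have hmem := mem_projThread hyτ.1
          rw [← hcontra, hτproj] at hmem
          simp at hmem
      have IH2 : CoveredBy I (x :: τ) (x :: (A ++ B ++ C)) := coveredBy_cons x IH
      rw [List.append_assoc] at IH2
      rw [show A ++ B ++ x :: C = (A ++ B) ++ x :: C from rfl]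
      exact Relation.ReflTransGen.trans IH2
        (by rw [← List.append_assoc] at *; exact coveredBy_move x (A ++ B) C hmv)

end Stmt14
namespace Stmt14

lemma restrictSigma_append {α : Type} (τ σ : List (Option α × ℕ)) :
    restrictSigma (τ ++ σ) = restrictSigma τ ++ restrictSigma σ :=
  List.filterMap_append

lemma restrictSigma_map_some {α : Type} (v : α) (A : List ℕ) :
    restrictSigma (A.map (fun j => ((some v : Option α), j))) = A.map (fun j => (v, j)) := by
  induction A with
  | nil => rfl
  | cons j A ih => simp [restrictSigma, List.filterMap_cons] at *

lemma restrictSigma_map_none {α : Type} (A : List ℕ) :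
    restrictSigma (A.map (fun j => ((none : Option α), j))) = [] := by
  induction A with
  | nil => rfl
  | cons j A ih => simpa [restrictSigma, List.filterMap_cons] using ih

lemma projThread_map_pair {α : Type} (v : α) (A : List ℕ) (i : ℕ) :
    projThread i (A.map (fun j => (v, j))) = List.replicate (A.count i) v := by
  induction A with
  | nil => rfl
  | cons j A ih =>
    by_cases h : j = i <;>
      simp [projThread_cons, h, ih, List.count_cons, List.replicate_succ, Ne.symm]

lemma proj_restrictSigma {α : Type} (i : ℕ) (τ : List (Option α × ℕ)) :
    projThread i (restrictSigma τ) = (projThread i τ).filterMap id := by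
  induction τ with
  | nil => rfl
  | cons x τ ih =>
    obtain ⟨o, j⟩ := x
    cases o <;> by_cases h : j = i <;>
      simp [restrictSigma, List.filterMap_cons, projThread_cons, h, ih] at * <;> exact ih

/-- number of `•`s of thread `i` in `ρ`. -/
def countB {α : Type} (i : ℕ) (ρ : List (Option α × ℕ)) : ℕ :=
  ((projThread i ρ).filter (fun o => o.isNone)).length

lemma countB_append {α : Type} (i : ℕ) (ρ σ : List (Option α × ℕ)) :
    countB i (ρ ++ σ) = countB i ρ + countB i σ := by
  simp [countB, projThread_append, List.filter_append]

lemma countB_eq_zero {α : Type} (i : ℕ) {ρ : List (Option α × ℕ)}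
    (h : ∀ x ∈ ρ, ∃ a' : α, x.1 = some a') : countB i ρ = 0 := by
  induction ρ with
  | nil => rfl
  | cons x ρ ih =>
    obtain ⟨a', ha⟩ := h x (by simp)
    have := ih (fun y hy => h y (by simp [hy]))
    by_cases hx : x.2 = i <;> simp [countB, projThread_cons, hx, ha] at *
    · exact this
    · exact this

lemma repl_eq_abc {α : Type} {a b c : α} (hab : a ≠ b) (hac : a ≠ c) (hbc : b ≠ c)
    {k m n : ℕ}
    (h : List.replicate k a ++ (List.replicate m b ++ List.replicate n c) = [a, b, c]) :
    k = 1 ∧ m = 1 ∧ n = 1 := by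
  have hlen : k + (m + n) = 3 := by simpa using congrArg List.length h
  have hk : k ≤ 3 := by omega
  have hm : m ≤ 3 := by omega
  have hn : n ≤ 3 := by omega
  interval_cases k <;> interval_cases m <;> interval_cases n <;>
    simp_all [List.replicate_succ, Ne.symm hab, Ne.symm hac, Ne.symm hbc]

lemma repl_eq_nil {α : Type} {a b c : α} {k m n : ℕ}
    (h : List.replicate k a ++ (List.replicate m b ++ List.replicate n c) = ([] : List α)) :
    k = 0 ∧ m = 0 ∧ n = 0 := by
  have hlen : k + (m + n) = 0 := by simpa using congrArg List.length h
  omega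

end Stmt14
namespace Stmt14

lemma count_sort (T : Finset ℕ) (i : ℕ) :
    (T.sort (· ≤ ·)).count i = if i ∈ T then 1 else 0 := by
  by_cases h : i ∈ T
  · rw [if_pos h]
    exact List.count_eq_one_of_mem (Finset.sort_nodup _ _) ((Finset.mem_sort _).2 h)
  · rw [if_neg h]
    exact List.count_eq_zero.2 (fun hc => h ((Finset.mem_sort _).1 hc))

lemma countB_bulletWord {α : Type} (T : Finset ℕ) (i : ℕ) :
    countB i (bulletWord (α := α) T) = if i ∈ T then 1 else 0 := by
  have h1 : projThread i (bulletWord (α := α) T)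
      = List.replicate ((T.sort (· ≤ ·)).count i) (none : Option α) :=
    projThread_map_pair (none : Option α) (T.sort (· ≤ ·)) i
  unfold countB
  rw [h1, count_sort]
  by_cases h : i ∈ T <;> simp [h]

lemma projThread_bulletWord {α : Type} (T : Finset ℕ) (i : ℕ) :
    projThread i (bulletWord (α := α) T) =
      List.replicate (if i ∈ T then 1 else 0) (none : Option α) := by
  have h1 : projThread i (bulletWord (α := α) T)
      = List.replicate ((T.sort (· ≤ ·)).count i) (none : Option α) :=
    projThread_map_pair (none : Option α) (T.sort (· ≤ ·)) i
  rw [h1, count_sort]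

lemma phase_idx {α : Type} {T : Finset ℕ} {w : List (Option α × ℕ)}
    (h : PhaseWord T w) : ∀ x ∈ w, x.2 ∈ T := by
  induction h with
  | nil => intro x hx; simp at hx
  | act hw _ ih =>
    intro x hx
    rcases List.mem_append.1 hx with h | h
    · exact (hw x h).2
    · exact ih x h
  | bullet _ ih =>
    intro x hx
    rcases List.mem_append.1 hx with h | h
    · obtain ⟨t, ht, rfl⟩ := List.mem_map.1 h
      exact (Finset.mem_sort _).1 ht
    · exact ih x h

lemma syncT_idx {α : Type} {T : Finset ℕ} {τ : List (Option α × ℕ)}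
    (h : SyncT T τ) : ∀ x ∈ τ, x.2 ∈ T := by
  induction h with
  | base => intro x hx; simp at hx
  | step hsub hph _ ih =>
    intro x hx
    rcases List.mem_append.1 hx with h | h
    · exact phase_idx hph x h
    · exact hsub.subset (ih x h)

lemma phase_countB_total {α : Type} {T : Finset ℕ} {w : List (Option α × ℕ)}
    (h : PhaseWord T w) : ∀ k ∈ T, ∀ k' ∈ T, countB k w = countB k' w := by
  induction h with
  | nil => intro _ _ _ _; rfl
  | act hw _ ih =>
    intro k hk k' hk'
    rw [countB_append, countB_append, countB_eq_zero _ (fun x hx => (hw x hx).1),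
      countB_eq_zero _ (fun x hx => (hw x hx).1), ih k hk k' hk']
  | bullet _ ih =>
    intro k hk k' hk'
    rw [countB_append, countB_append, countB_bulletWord, countB_bulletWord,
      if_pos hk, if_pos hk', ih k hk k' hk']

lemma phase_countB {α : Type} {T : Finset ℕ} {w : List (Option α × ℕ)}
    (h : PhaseWord T w) :
    ∀ (ρ : List (Option α × ℕ)) (x : α) (i : ℕ) (σ : List (Option α × ℕ)),
      w = ρ ++ (some x, i) :: σ → i ∈ T ∧ ∀ k ∈ T, countB k ρ = countB i ρ := by
  induction h with
  | nil =>
    intro ρ x i σ h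
    exact absurd h.symm (List.append_ne_nil_of_right_ne_nil _ (by simp))
  | @act w' τ' hw _ ih =>
    intro ρ x i σ heq
    rcases List.append_eq_append_iff.1 heq with ⟨a', ha1, ha2⟩ | ⟨c', hc1, hc2⟩
    · -- marked letter in the tail τ', ρ = w' ++ a'
      obtain ⟨hi, hco⟩ := ih a' x i σ ha2
      refine ⟨hi, fun k hk => ?_⟩
      have hz : ∀ k' : ℕ, countB k' w' = 0 := fun k' => countB_eq_zero k' (fun y hy => (hw y hy).1)
      rw [ha1, countB_append, countB_append, hz, hz, hco k hk]
    · cases hc' : c' with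
      | nil =>
        subst hc'
        simp only [List.append_nil] at hc1
        obtain ⟨hi, hco⟩ := ih [] x i σ (by simpa using hc2.symm)
        refine ⟨hi, fun k hk => ?_⟩
        subst hc1
        rw [countB_eq_zero _ (fun y hy => (hw y hy).1),
          countB_eq_zero _ (fun y hy => (hw y hy).1)]
      | cons z c'' =>
        subst hc'
        rw [List.cons_append] at hc2
        injection hc2 with h1 h2
        subst h1
        have hiw : (some x, i) ∈ w' :=
          hc1 ▸ List.mem_append_right ρ (List.mem_cons_self)
        have hsub : ∀ y ∈ ρ, ∃ a' : α, y.1 = some a' := by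
          intro y hy
          exact (hw y (hc1 ▸ List.mem_append_left _ hy)).1
        exact ⟨(hw _ hiw).2,
          fun k hk => by rw [countB_eq_zero _ hsub, countB_eq_zero _ hsub]⟩
  | @bullet τ' hpw ih =>
    intro ρ x i σ heq
    rcases List.append_eq_append_iff.1 heq with ⟨a', ha1, ha2⟩ | ⟨c', hc1, hc2⟩
    · obtain ⟨hi, hco⟩ := ih a' x i σ ha2
      refine ⟨hi, fun k hk => ?_⟩
      rw [ha1, countB_append, countB_append, countB_bulletWord, countB_bulletWord,
        if_pos hk, if_pos hi, hco k hk]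
    · cases hc' : c' with
      | nil =>
        subst hc'
        simp only [List.append_nil] at hc1
        obtain ⟨hi, hco⟩ := ih [] x i σ (by simpa using hc2.symm)
        refine ⟨hi, fun k hk => ?_⟩
        subst hc1
        rw [countB_bulletWord, countB_bulletWord, if_pos hk, if_pos hi]
      | cons z c'' =>
        subst hc'
        exfalso
        rw [List.cons_append] at hc2
        injection hc2 with h1 h2
        subst h1
        have : (some x, i) ∈ bulletWord (α := α) T :=
          hc1 ▸ List.mem_append_right ρ (List.mem_cons_self)
        obtain ⟨t, _, hzt⟩ := List.mem_map.1 this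
        simp at hzt

lemma syncT_mono {α : Type} {T : Finset ℕ} {τ : List (Option α × ℕ)} (h : SyncT T τ) :
    ∀ (ρ₁ : List (Option α × ℕ)) (x : α) (i : ℕ) (ρ₂ : List (Option α × ℕ)) (y : α)
      (j : ℕ) (ρ₃ : List (Option α × ℕ)),
      τ = ρ₁ ++ (some x, i) :: (ρ₂ ++ (some y, j) :: ρ₃) →
      countB i ρ₁ ≤ countB j (ρ₁ ++ (some x, i) :: ρ₂) := by
  induction h with
  | base =>
    intro ρ₁ x i ρ₂ y j ρ₃ h
    exact absurd h (List.append_ne_nil_of_right_ne_nil _ (by simp)).symm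
  | @step T T' τ₁ τ₂ hsub hph hsync ih =>
    intro ρ₁ x i ρ₂ y j ρ₃ heq
    rcases List.append_eq_append_iff.1 heq with ⟨a', ha1, ha2⟩ | ⟨c', hc1, hc2⟩
    · -- both letters in τ₂; ρ₁ = τ₁ ++ a'
      have hIH := ih a' x i ρ₂ y j ρ₃ ha2
      have hiT' : i ∈ T' := by
        refine syncT_idx hsync (some x, i) ?_
        rw [ha2]; exact List.mem_append_right _ (List.mem_cons_self)
      have hjT' : j ∈ T' := by
        refine syncT_idx hsync (some y, j) ?_
        rw [ha2]
        exact List.mem_append_right _ (List.mem_cons_of_mem _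
          (List.mem_append_right _ (List.mem_cons_self)))
      have htot := phase_countB_total hph i (hsub.subset hiT') j (hsub.subset hjT')
      subst ha1
      rw [countB_append] at hIH
      have e1 : countB i (τ₁ ++ a') = countB i τ₁ + countB i a' := countB_append _ _ _
      have e2 : countB j (τ₁ ++ a' ++ (some x, i) :: ρ₂)
          = countB j τ₁ + (countB j a' + countB j ((some x, i) :: ρ₂)) := by
        rw [List.append_assoc, countB_append, countB_append]
      omega
    · cases hc' : c' with
      | nil =>
        subst hc'
        simp only [List.append_nil] at hc1
        have hτ₂ : τ₂ = (some x, i) :: (ρ₂ ++ (some y, j) :: ρ₃) := by simpa using hc2.symm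
        have hIH := ih [] x i ρ₂ y j ρ₃ (by simpa using hτ₂)
        have hiT' : i ∈ T' := by
          refine syncT_idx hsync (some x, i) ?_
          rw [hτ₂]; exact List.mem_cons_self
        have hjT' : j ∈ T' := by
          refine syncT_idx hsync (some y, j) ?_
          rw [hτ₂]
          exact List.mem_cons_of_mem _ (List.mem_append_right _ (List.mem_cons_self))
        have htot := phase_countB_total hph i (hsub.subset hiT') j (hsub.subset hjT')
        rw [hc1] at htot
        have e2 : countB j (ρ₁ ++ (some x, i) :: ρ₂)
            = countB j ρ₁ + countB j ((some x, i) :: ρ₂) := countB_append _ _ _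
        omega
      | cons z c'' =>
        subst hc'
        rw [List.cons_append] at hc2
        injection hc2 with h1 h2
        subst h1
        obtain ⟨hiT, hco⟩ := phase_countB hph ρ₁ x i c'' hc1
        have hjT : j ∈ T := by
          have hmem : (some y, j) ∈ c'' ++ τ₂ := by
            rw [← h2]; exact List.mem_append_right _ (List.mem_cons_self)
          rcases List.mem_append.1 hmem with h | h
          · exact phase_idx hph (some y, j) (hc1 ▸ List.mem_append_right _
              (List.mem_cons_of_mem _ h))
          · exact hsub.subset (syncT_idx hsync _ h)
        calc countB i ρ₁ = countB j ρ₁ := (hco j hjT).symm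
          _ ≤ countB j ρ₁ + countB j ((some x, i) :: ρ₂) := Nat.le_add_right _ _
          _ = countB j (ρ₁ ++ (some x, i) :: ρ₂) := (countB_append _ _ _).symm

end Stmt14
namespace Stmt14

lemma restrictSigma_bulletWord {α : Type} (T : Finset ℕ) :
    restrictSigma (bulletWord (α := α) T) = [] :=
  restrictSigma_map_none _

lemma map_snd_eq {α : Type} (v : α) :
    ∀ (l : List (α × ℕ)), (∀ x ∈ l, x.1 = v) →
      l = (l.map Prod.snd).map (fun j => (v, j)) := by
  intro l h
  induction l with
  | nil => rfl
  | cons x l ih =>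
    have hx : x = (v, x.2) := by
      obtain ⟨x1, x2⟩ := x
      have := h (x1, x2) (by simp)
      simp at this
      simp [this]
    rw [List.map_cons, List.map_cons, ← ih (fun y hy => h y (by simp [hy])), ← hx]

lemma sorted_mem_instrLang {α : Type} (a b c : α) (hab : a ≠ b) (hac : a ≠ c) (hbc : b ≠ c)
    (A B C : List ℕ)
    (hproj : ∀ i, projThread i (A.map (fun j => (a, j)) ++ B.map (fun j => (b, j))
        ++ C.map (fun j => (c, j))) = [a, b, c] ∨
      projThread i (A.map (fun j => (a, j)) ++ B.map (fun j => (b, j))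
        ++ C.map (fun j => (c, j))) = []) :
    (A.map (fun j => (a, j)) ++ B.map (fun j => (b, j)) ++ C.map (fun j => (c, j)))
      ∈ instrLang (exG14' a b c) := by
  have hcnt : ∀ i, (A.count i = 1 ∧ B.count i = 1 ∧ C.count i = 1) ∨
      (A.count i = 0 ∧ B.count i = 0 ∧ C.count i = 0) := by
    intro i
    have h := hproj i
    rw [projThread_append, projThread_append, projThread_map_pair, projThread_map_pair,
      projThread_map_pair, List.append_assoc] at h
    rcases h with h | h
    · exact Or.inl (repl_eq_abc hab hac hbc h)
    · exact Or.inr (repl_eq_nil h)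
  set T : Finset ℕ := A.toFinset with hT
  have hmemT : ∀ i, i ∈ T ↔ A.count i = 1 := by
    intro i
    constructor
    · intro h
      have h0 : 0 < A.count i := List.count_pos_iff.2 (List.mem_toFinset.1 h)
      rcases hcnt i with h' | h' <;> omega
    · intro h
      exact List.mem_toFinset.2 (List.count_pos_iff.1 (by omega))
  have hBmem : ∀ j ∈ B, j ∈ T := by
    intro j hj
    have h0 : 0 < B.count j := List.count_pos_iff.2 hj
    rcases hcnt j with h' | h'
    · exact (hmemT j).2 h'.1
    · omega
  have hCmem : ∀ j ∈ C, j ∈ T := by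
    intro j hj
    have h0 : 0 < C.count j := List.count_pos_iff.2 hj
    rcases hcnt j with h' | h'
    · exact (hmemT j).2 h'.1
    · omega
  refine ⟨A.map (fun j => ((some a : Option α), j)) ++ (bulletWord T ++
    (B.map (fun j => ((some b : Option α), j)) ++ (bulletWord T ++
      C.map (fun j => ((some c : Option α), j))))), ?_, ?_, ?_⟩
  · simp [restrictSigma_append, restrictSigma_map_some, restrictSigma_bulletWord]
  · -- SyncBullet
    have h1 : ∀ x ∈ A.map (fun j => ((some a : Option α), j)),
        (∃ a' : α, x.1 = some a') ∧ x.2 ∈ T := by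
      intro x hx
      obtain ⟨j, hj, rfl⟩ := List.mem_map.1 hx
      exact ⟨⟨a, rfl⟩, List.mem_toFinset.2 hj⟩
    have h2 : ∀ x ∈ B.map (fun j => ((some b : Option α), j)),
        (∃ a' : α, x.1 = some a') ∧ x.2 ∈ T := by
      intro x hx
      obtain ⟨j, hj, rfl⟩ := List.mem_map.1 hx
      exact ⟨⟨b, rfl⟩, hBmem j hj⟩
    have h3 : ∀ x ∈ C.map (fun j => ((some c : Option α), j)),
        (∃ a' : α, x.1 = some a') ∧ x.2 ∈ T := by
      intro x hx
      obtain ⟨j, hj, rfl⟩ := List.mem_map.1 hx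
      exact ⟨⟨c, rfl⟩, hCmem j hj⟩
    have hph0 : PhaseWord T (C.map (fun j => ((some c : Option α), j)) ++ []) :=
      PhaseWord.act h3 PhaseWord.nil
    rw [List.append_nil] at hph0
    have hph : PhaseWord T (A.map (fun j => ((some a : Option α), j)) ++ (bulletWord T ++
        (B.map (fun j => ((some b : Option α), j)) ++ (bulletWord T ++
          C.map (fun j => ((some c : Option α), j)))))) :=
      PhaseWord.act h1 (PhaseWord.bullet (PhaseWord.act h2 (PhaseWord.bullet hph0)))
    by_cases hTe : T = ∅
    · -- everything is empty
      have hA0 : A = [] := by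
        cases hA : A with
        | nil => rfl
        | cons j A' =>
          exfalso
          have : j ∈ T := List.mem_toFinset.2 (by rw [hA]; simp)
          rw [hTe] at this
          simp at this
      refine ⟨∅, ?_⟩
      have hB0 : B = [] := by
        rcases List.eq_nil_or_concat B with h | ⟨B', j, rfl⟩
        · exact h
        · exfalso
          have := hBmem j (by simp)
          rw [hTe] at this
          simp at this
      have hC0 : C = [] := by
        rcases List.eq_nil_or_concat C with h | ⟨C', j, rfl⟩
        · exact h
        · exfalso
          have := hCmem j (by simp)
          rw [hTe] at this
          simp at this
      have : (A.map (fun j => ((some a : Option α), j)) ++ (bulletWord T ++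
          (B.map (fun j => ((some b : Option α), j)) ++ (bulletWord T ++
            C.map (fun j => ((some c : Option α), j)))))) = [] := by
        simp [hA0, hB0, hC0, hTe, bulletWord]
      rw [this]
      exact SyncT.base
    · refine ⟨T, ?_⟩
      have hsub : (∅ : Finset ℕ) ⊂ T :=
        Finset.empty_ssubset.2 (Finset.nonempty_iff_ne_empty.2 hTe)
      have := SyncT.step hsub hph SyncT.base
      simpa using this
  · -- projections
    intro i
    have hpt : projThread i (A.map (fun j => ((some a : Option α), j)) ++ (bulletWord T ++
        (B.map (fun j => ((some b : Option α), j)) ++ (bulletWord T ++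
          C.map (fun j => ((some c : Option α), j)))))) =
        List.replicate (A.count i) (some a) ++ (List.replicate (if i ∈ T then 1 else 0) none
          ++ (List.replicate (B.count i) (some b) ++
            (List.replicate (if i ∈ T then 1 else 0) none ++
              List.replicate (C.count i) (some c)))) := by
      rw [projThread_append, projThread_append, projThread_append, projThread_append,
        projThread_map_pair, projThread_map_pair, projThread_map_pair,
        projThread_bulletWord]
    rcases hcnt i with h | h
    · left
      have hiT : i ∈ T := (hmemT i).2 h.1
      rw [hpt, h.1, h.2.1, h.2.2, if_pos hiT, traces14']
      simp [List.replicate_succ]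
    · right
      have hiT : i ∉ T := by
        intro hc
        have := (hmemT i).1 hc
        omega
      rw [hpt, h.1, h.2.1, h.2.2, if_neg hiT]
      simp

end Stmt14
namespace Stmt14

lemma swapStep_filter {α : Type} {I : Set (α × α)} (q : α × ℕ → Bool)
    (hq : ∀ (x y : α) (i j : ℕ), (x, y) ∈ I → i ≠ j →
      ¬(q (x, i) = true ∧ q (y, j) = true))
    {τ τ' : List (α × ℕ)} (h : SwapStep I τ τ') : τ'.filter q = τ.filter q := by
  obtain ⟨ρ, σ, x, y, i, j, hI, hij, rfl, rfl⟩ := h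
  have hnq := hq x y i j hI hij
  rw [List.filter_append, List.filter_append, List.filter_cons, List.filter_cons,
    List.filter_cons, List.filter_cons]
  cases hqx : q (x, i) <;> cases hqy : q (y, j) <;> simp_all

lemma coveredBy_filter {α : Type} {I : Set (α × α)} (q : α × ℕ → Bool)
    (hq : ∀ (x y : α) (i j : ℕ), (x, y) ∈ I → i ≠ j →
      ¬(q (x, i) = true ∧ q (y, j) = true))
    {τ τ' : List (α × ℕ)} (h : CoveredBy I τ τ') : τ'.filter q = τ.filter q := by
  induction h with
  | refl => rfl
  | tail _ h2 ih => exact (swapStep_filter q hq h2).trans ih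

lemma restrictSigma_split {α : Type} {τ : List (Option α × ℕ)} {u v : List (α × ℕ)}
    {x0 : α} {i0 : ℕ} (h : restrictSigma τ = u ++ (x0, i0) :: v) :
    ∃ ρ₁ ρ₂, τ = ρ₁ ++ (some x0, i0) :: ρ₂ ∧ restrictSigma ρ₁ = u ∧ restrictSigma ρ₂ = v := by
  rw [restrictSigma] at h
  obtain ⟨l₁, l₂, rfl, h1, h2⟩ := List.filterMap_eq_append_iff.1 h
  obtain ⟨l₂₁, e, l₂₂, rfl, hnone, he, h3⟩ := List.filterMap_eq_cons_iff.1 h2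
  have he' : e = ((some x0 : Option α), i0) := by
    obtain ⟨o, k⟩ := e
    cases o with
    | none => simp at he
    | some z =>
      simp only [Option.map_some] at he
      injection he with he
      injection he with he1 he2
      rw [he1, he2]
  subst he'
  refine ⟨l₁ ++ l₂₁, l₂₂, by simp, ?_, h3⟩
  rw [restrictSigma, List.filterMap_append, h1, List.filterMap_eq_nil_iff.2 hnone,
    List.append_nil]

lemma prefix_before_c {α : Type} {a b c : α} (hac : a ≠ c) (hbc : b ≠ c)
    {P S : List (Option α)}
    (h : P ++ some c :: S = [some a, none, some b, none, some c]) :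
    P = [some a, none, some b, none] := by
  match P, h with
  | [], h =>
    exfalso
    injection h with h1 _
    injection h1 with h2
    exact hac h2.symm
  | [p1], h =>
    exfalso
    injection h with _ h
    injection h with h1 _
    cases h1
  | [p1, p2], h =>
    exfalso
    injection h with _ h; injection h with _ h; injection h with h1 _
    injection h1 with h2
    exact hbc h2.symm
  | [p1, p2, p3], h =>
    exfalso
    injection h with _ h; injection h with _ h; injection h with _ h
    injection h with h1 _
    cases h1
  | [p1, p2, p3, p4], h =>
    simp only [List.cons_append, List.nil_append, List.cons.injEq] at h
    simp [h.1, h.2.1, h.2.2.1, h.2.2.2.1]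
  | (p1 :: p2 :: p3 :: p4 :: p5 :: rest), h =>
    exfalso
    simp only [List.cons_append, List.cons.injEq] at h
    have := h.2.2.2.2.2
    simp at this

lemma prefix_before_b {α : Type} {a b c : α} (hab : a ≠ b) (hbc : b ≠ c)
    {P S : List (Option α)}
    (h : P ++ some b :: S = [some a, none, some b, none, some c]) :
    P = [some a, none] := by
  match P, h with
  | [], h =>
    exfalso
    injection h with h1 _
    injection h1 with h2
    exact hab h2.symm
  | [p1], h =>
    exfalso
    injection h with _ h
    injection h with h1 _
    cases h1
  | [p1, p2], h =>
    simp only [List.cons_append, List.nil_append, List.cons.injEq] at h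
    simp [h.1, h.2.1]
  | [p1, p2, p3], h =>
    exfalso
    injection h with _ h; injection h with _ h; injection h with _ h
    injection h with h1 _
    cases h1
  | [p1, p2, p3, p4], h =>
    exfalso
    injection h with _ h; injection h with _ h; injection h with _ h
    injection h with _ h; injection h with h1 _
    injection h1 with h2
    exact hbc h2
  | (p1 :: p2 :: p3 :: p4 :: p5 :: rest), h =>
    exfalso
    simp only [List.cons_append, List.cons.injEq] at h
    have := h.2.2.2.2.2
    simp at this

lemma not_covered {α : Type} (a b c : α) (hab : a ≠ b) (hac : a ≠ c) (hbc : b ≠ c)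
    {τ' : List (α × ℕ)} (hin : τ' ∈ instrLang (exG14' a b c))
    {u v w : List (α × ℕ)}
    (heq : τ' = u ++ (c, 1) :: (v ++ (b, 2) :: w)) : False := by
  obtain ⟨tt, hres, ⟨T, hsync⟩, hth⟩ := hin
  rw [heq] at hres
  obtain ⟨ρ₁, ρ', hτ, hu, hrest⟩ := restrictSigma_split hres.symm
  obtain ⟨ρ₂, ρ₃, hρ', hv, hw⟩ := restrictSigma_split hrest
  subst hρ'
  have h1 : projThread 1 tt = [some a, none, some b, none, some c] := by
    rcases hth 1 with h | h
    · rw [traces14'] at h; exact h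
    · exfalso
      have hm : ((some c : Option α), 1) ∈ tt := by
        rw [hτ]; exact List.mem_append_right _ (List.mem_cons_self)
      have := mem_projThread hm
      rw [h] at this
      simp at this
  have h2 : projThread 2 tt = [some a, none, some b, none, some c] := by
    rcases hth 2 with h | h
    · rw [traces14'] at h; exact h
    · exfalso
      have hm : ((some b : Option α), 2) ∈ tt := by
        rw [hτ]
        exact List.mem_append_right _ (List.mem_cons_of_mem _
          (List.mem_append_right _ (List.mem_cons_self)))
      have := mem_projThread hm
      rw [h] at this
      simp at this
  have hproj1 : projThread 1 tt = projThread 1 ρ₁ ++ some c ::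
      projThread 1 (ρ₂ ++ (some b, 2) :: ρ₃) := by
    rw [hτ, projThread_append, projThread_cons, if_pos rfl]
  have hP1 : projThread 1 ρ₁ = [some a, none, some b, none] :=
    prefix_before_c hac hbc (hproj1.symm.trans h1)
  have hcB1 : countB 1 ρ₁ = 2 := by simp [countB, hP1]
  have hproj2 : projThread 2 (ρ₁ ++ (some c, 1) :: ρ₂) =
      projThread 2 ρ₁ ++ projThread 2 ρ₂ := by
    rw [projThread_append, projThread_cons, if_neg (by simp)]
  have hproj2' : projThread 2 tt = (projThread 2 ρ₁ ++ projThread 2 ρ₂) ++ some b ::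
      projThread 2 ρ₃ := by
    rw [hτ, projThread_append, projThread_cons, if_neg (by simp), projThread_append,
      projThread_cons, if_pos rfl, List.append_assoc]
  have hP2 : projThread 2 ρ₁ ++ projThread 2 ρ₂ = [some a, none] :=
    prefix_before_b hab hbc (hproj2'.symm.trans h2)
  have hcB2 : countB 2 (ρ₁ ++ (some c, 1) :: ρ₂) = 1 := by
    simp [countB, hproj2, hP2]
  have := syncT_mono hsync ρ₁ c 1 ρ₂ b 2 ρ₃ hτ
  omega

lemma alph14 {α : Type} (a b c : α) : (exG14 a b c).alphabet = {a, b, c} := by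
  ext x
  simp only [Set.mem_insert_iff, Set.mem_singleton_iff]
  constructor
  · rintro ⟨ℓ, ℓ', h⟩
    rcases h with ⟨_, rfl, _⟩ | ⟨_, rfl, _⟩ | ⟨_, rfl, _⟩ <;> simp
  · intro h
    rcases h with rfl | rfl | rfl
    · exact ⟨(0 : Fin 4), (1 : Fin 4), Or.inl ⟨rfl, rfl, rfl⟩⟩
    · exact ⟨(1 : Fin 4), (2 : Fin 4), Or.inr (Or.inl ⟨rfl, rfl, rfl⟩)⟩
    · exact ⟨(2 : Fin 4), (3 : Fin 4), Or.inr (Or.inr ⟨rfl, rfl, rfl⟩)⟩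

end Stmt14
open Stmt14 in
/-- Mover properties do not characterize sound sync-point
instrumentations. `G'` is a sync-point instrumentation of `G`; it is sound wrt.
`I = {a,b,c}² ∖ {(b,b),(c,c)}` but unsound wrt. `I' = {a,b,c}² ∖ {(b,c),(c,b)}`, although
every action has the same left/right mover status wrt. `I` and `I'`. -/
theorem stmt_14 {α : Type} (a b c : α) (hab : a ≠ b) (hac : a ≠ c) (hbc : b ≠ c)
    (I I' : Set (α × α))
    (hI : I = (({a, b, c} : Set α) ×ˢ ({a, b, c} : Set α)) \ {(b, b), (c, c)})
    (hI' : I' = (({a, b, c} : Set α) ×ˢ ({a, b, c} : Set α)) \ {(b, c), (c, b)}) :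
    SyncInstr (exG14 a b c) (exG14' a b c) ∧
      MazReduction I (instrLang (exG14' a b c)) (progLang (exG14 a b c)) ∧
      ¬ MazReduction I' (instrLang (exG14' a b c)) (progLang (exG14 a b c)) ∧
      ∀ x ∈ ({a, b, c} : Set α),
        (LeftMover (exG14 a b c) I x ↔ LeftMover (exG14 a b c) I' x) ∧
        (RightMover (exG14 a b c) I x ↔ RightMover (exG14 a b c) I' x) := by
  classical
  refine ⟨⟨?_, ?_⟩, ⟨?_, ?_⟩, ?_, ?_⟩
  · -- proj_traces
    rw [traces14, traces14', Set.image_singleton]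
    rfl
  · -- proj_inj
    intro τ₁ h₁ τ₂ h₂ _
    rw [traces14', Set.mem_singleton_iff] at h₁ h₂
    rw [h₁, h₂]
  · -- instrLang ⊆ progLang
    rintro τ ⟨tt, rfl, _, hth⟩ i
    rw [proj_restrictSigma, traces14]
    rcases hth i with h | h
    · rw [traces14', Set.mem_singleton_iff] at h
      rw [h]
      left
      rfl
    · rw [h]
      right
      rfl
  · -- covering for I
    intro τ hτ
    have hsuf : ∀ i, projThread i τ <:+ [a, b, c] := by
      intro i
      rcases hτ i with h | h
      · rw [traces14, Set.mem_singleton_iff] at h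
        rw [h]
      · rw [h]
        exact List.nil_suffix
    have hIba : (b, a) ∈ I := by
      rw [hI]
      refine ⟨⟨by simp, by simp⟩, ?_⟩
      simp only [Set.mem_insert_iff, Set.mem_singleton_iff, Prod.mk.injEq, not_or]
      exact ⟨fun h => hab h.2, fun h => hbc h.1⟩
    have hIca : (c, a) ∈ I := by
      rw [hI]
      refine ⟨⟨by simp, by simp⟩, ?_⟩
      simp only [Set.mem_insert_iff, Set.mem_singleton_iff, Prod.mk.injEq, not_or]
      exact ⟨fun h => hbc h.1.symm, fun h => hac h.2⟩
    have hIcb : (c, b) ∈ I := by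
      rw [hI]
      refine ⟨⟨by simp, by simp⟩, ?_⟩
      simp only [Set.mem_insert_iff, Set.mem_singleton_iff, Prod.mk.injEq, not_or]
      exact ⟨fun h => hbc h.1.symm, fun h => hbc h.2⟩
    have hcov := sort_covered a b c hab hac hbc I hIba hIca hIcb τ hsuf
    set A := (τ.filter (fun x => x.1 = a)).map Prod.snd with hA
    set B := (τ.filter (fun x => x.1 = b)).map Prod.snd with hB
    set C := (τ.filter (fun x => x.1 = c)).map Prod.snd with hC
    have hfa : τ.filter (fun x => x.1 = a) = A.map (fun j => (a, j)) :=
      map_snd_eq a _ (fun x hx => by simpa using (List.mem_filter.1 hx).2)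
    have hfb : τ.filter (fun x => x.1 = b) = B.map (fun j => (b, j)) :=
      map_snd_eq b _ (fun x hx => by simpa using (List.mem_filter.1 hx).2)
    have hfc : τ.filter (fun x => x.1 = c) = C.map (fun j => (c, j)) :=
      map_snd_eq c _ (fun x hx => by simpa using (List.mem_filter.1 hx).2)
    rw [hfa, hfb, hfc] at hcov
    refine ⟨_, sorted_mem_instrLang a b c hab hac hbc A B C ?_, hcov⟩
    intro i
    have hp := coveredBy_projThread hcov i
    rw [hp]
    rcases hτ i with h | h
    · rw [traces14, Set.mem_singleton_iff] at h
      exact Or.inl h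
    · exact Or.inr h
  · -- unsoundness wrt I'
    rintro ⟨-, hcov⟩
    have hτ0 : ([(a,1),(b,1),(c,1),(a,2),(b,2),(c,2)] : List (α × ℕ))
        ∈ progLang (exG14 a b c) := by
      intro i
      rw [traces14]
      rcases eq_or_ne i 1 with rfl | h1
      · left
        rw [Set.mem_singleton_iff]
        simp [projThread_cons]
      · rcases eq_or_ne i 2 with rfl | h2
        · left
          rw [Set.mem_singleton_iff]
          simp [projThread_cons]
        · right
          simp [projThread_cons, Ne.symm h1, Ne.symm h2]
    obtain ⟨τ', hτ'in, hcov'⟩ := hcov _ hτ0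
    set q : α × ℕ → Bool := fun x => decide (x = (c, 1)) || decide (x = (b, 2)) with hq
    have hqI : ∀ (x y : α) (i j : ℕ), (x, y) ∈ I' → i ≠ j →
        ¬(q (x, i) = true ∧ q (y, j) = true) := by
      rintro x y i j hxy hij ⟨hqx, hqy⟩
      rw [hq] at hqx hqy
      simp only [Bool.or_eq_true, decide_eq_true_eq] at hqx hqy
      rw [hI'] at hxy
      obtain ⟨-, hnot⟩ := hxy
      simp only [Set.mem_insert_iff, Set.mem_singleton_iff, not_or] at hnot
      rcases hqx with hx | hx <;> rcases hqy with hy | hy <;>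
        [skip; skip; skip; skip]
      · injection hx with hx1 hx2
        injection hy with hy1 hy2
        exact hij (hx2.trans hy2.symm)
      · injection hx with hx1 hx2
        injection hy with hy1 hy2
        subst hx1; subst hy1
        exact hnot.2 rfl
      · injection hx with hx1 hx2
        injection hy with hy1 hy2
        subst hx1; subst hy1
        exact hnot.1 rfl
      · injection hx with hx1 hx2
        injection hy with hy1 hy2
        exact hij (hx2.trans hy2.symm)
    have hfilt0 : ([(a,1),(b,1),(c,1),(a,2),(b,2),(c,2)] : List (α × ℕ)).filter q
        = [(c, 1), (b, 2)] := by
      rw [hq]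
      simp [List.filter_cons, Prod.ext_iff, hab, hac, hbc,
        Ne.symm hab, Ne.symm hac, Ne.symm hbc]
    have hfilt : τ'.filter q = [(c, 1), (b, 2)] := by
      rw [coveredBy_filter q hqI hcov', hfilt0]
    obtain ⟨u, l₂, hτ'eq, -, -, hf2⟩ := List.filter_eq_cons_iff.1 hfilt
    obtain ⟨v, w, hl₂, -, -, -⟩ := List.filter_eq_cons_iff.1 hf2
    exact not_covered a b c hab hac hbc hτ'in (by rw [hτ'eq, hl₂])
  · -- movers
    intro x hx
    have hbmem : b ∈ (exG14 a b c).alphabet := by rw [alph14 a b c]; simp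
    have hcmem : c ∈ (exG14 a b c).alphabet := by rw [alph14 a b c]; simp
    simp only [Set.mem_insert_iff, Set.mem_singleton_iff] at hx
    rcases hx with h | h | h <;> rw [h]
    · -- x = a
      have LI : LeftMover (exG14 a b c) I a := by
        intro y hy
        rw [alph14 a b c] at hy
        rw [hI]
        refine ⟨⟨hy, by simp⟩, ?_⟩
        simp only [Set.mem_insert_iff, Set.mem_singleton_iff, Prod.mk.injEq, not_or]
        exact ⟨fun h => hab h.2, fun h => hac h.2⟩
      have LI' : LeftMover (exG14 a b c) I' a := by
        intro y hy
        rw [alph14 a b c] at hy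
        rw [hI']
        refine ⟨⟨hy, by simp⟩, ?_⟩
        simp only [Set.mem_insert_iff, Set.mem_singleton_iff, Prod.mk.injEq, not_or]
        exact ⟨fun h => hac h.2, fun h => hab h.2⟩
      have RI : RightMover (exG14 a b c) I a := by
        intro y hy
        rw [alph14 a b c] at hy
        rw [hI]
        refine ⟨⟨by simp, hy⟩, ?_⟩
        simp only [Set.mem_insert_iff, Set.mem_singleton_iff, Prod.mk.injEq, not_or]
        exact ⟨fun h => hab h.1, fun h => hac h.1⟩
      have RI' : RightMover (exG14 a b c) I' a := by
        intro y hy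
        rw [alph14 a b c] at hy
        rw [hI']
        refine ⟨⟨by simp, hy⟩, ?_⟩
        simp only [Set.mem_insert_iff, Set.mem_singleton_iff, Prod.mk.injEq, not_or]
        exact ⟨fun h => hab h.1, fun h => hac h.1⟩
      exact ⟨iff_of_true LI LI', iff_of_true RI RI'⟩
    · -- x = b
      have LI : ¬ LeftMover (exG14 a b c) I b := by
        intro h
        have := h b hbmem
        rw [hI] at this
        exact this.2 (by simp)
      have LI' : ¬ LeftMover (exG14 a b c) I' b := by
        intro h
        have := h c hcmem
        rw [hI'] at this
        exact this.2 (by simp)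
      have RI : ¬ RightMover (exG14 a b c) I b := by
        intro h
        have := h b hbmem
        rw [hI] at this
        exact this.2 (by simp)
      have RI' : ¬ RightMover (exG14 a b c) I' b := by
        intro h
        have := h c hcmem
        rw [hI'] at this
        exact this.2 (by simp)
      exact ⟨iff_of_false LI LI', iff_of_false RI RI'⟩
    · -- x = c
      have LI : ¬ LeftMover (exG14 a b c) I c := by
        intro h
        have := h c hcmem
        rw [hI] at this
        exact this.2 (by simp)
      have LI' : ¬ LeftMover (exG14 a b c) I' c := by
        intro h
        have := h b hbmem
        rw [hI'] at this
        exact this.2 (by simp)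
      have RI : ¬ RightMover (exG14 a b c) I c := by
        intro h
        have := h c hcmem
        rw [hI] at this
        exact this.2 (by simp)
      have RI' : ¬ RightMover (exG14 a b c) I' c := by
        intro h
        have := h b hbmem
        rw [hI'] at this
        exact this.2 (by simp)
      exact ⟨iff_of_false LI LI', iff_of_false RI RI'⟩
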